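/- For M ∈ ℕ with M ≥ 2, define the asymptotic efficiency of SLS-based 1-D Standard ESPRIT for a single source as η_SLS(M) := (6/(M·(M²−1))) / ( 6·(M⁴ − 2M³ + 24M² − 22M + 23)/(M·(M²+11)²·(M−1)²) ) = (M²+11)²·(M−1)/((M+1)·(M⁴ − 2M³ + 24M² − 22M + 23)) = (M⁵ − M⁴ + 22M³ − 22M² + 121M − 121)/(M⁵ − M⁴ + 22M³ + 2M² + M + 23). Then: (i) η_SLS(2) = 1 and η_SLS(3) = 1; (ii) η_SLS(M) ≥ 36/37 for all M ≥ 2, with equality when M = 5; and (iii) η_SLS(M) → 1 as M → ∞. -/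

import Mathlib

open Filter

/-- Asymptotic efficiency statement of Theorem 6 of the paper: the efficiency
`η_SLS(M)` of SLS-based 1-D Standard ESPRIT for a single source (CRB divided by the
SLS MSE) simplifies to the two stated rational forms, equals 1 for `M = 2, 3`, is at
least `36/37` for all `M ≥ 2` with equality at `M = 5`, and tends to 1 as `M → ∞`. -/
theorem sls_esprit_asymptotic_efficiency
    (η : ℕ → ℝ)
    (hη : ∀ M, 2 ≤ M →
      η M = (6 / ((M : ℝ) * ((M : ℝ) ^ 2 - 1))) /
        (6 * ((M : ℝ) ^ 4 - 2 * (M : ℝ) ^ 3 + 24 * (M : ℝ) ^ 2 - 22 * (M : ℝ) + 23) /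
          ((M : ℝ) * ((M : ℝ) ^ 2 + 11) ^ 2 * ((M : ℝ) - 1) ^ 2))) :
    (∀ M, 2 ≤ M → η M =
      ((M : ℝ) ^ 2 + 11) ^ 2 * ((M : ℝ) - 1) /
        (((M : ℝ) + 1) *
          ((M : ℝ) ^ 4 - 2 * (M : ℝ) ^ 3 + 24 * (M : ℝ) ^ 2 - 22 * (M : ℝ) + 23))) ∧
    (∀ M, 2 ≤ M → η M =
      ((M : ℝ) ^ 5 - (M : ℝ) ^ 4 + 22 * (M : ℝ) ^ 3 - 22 * (M : ℝ) ^ 2 +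
          121 * (M : ℝ) - 121) /
        ((M : ℝ) ^ 5 - (M : ℝ) ^ 4 + 22 * (M : ℝ) ^ 3 + 2 * (M : ℝ) ^ 2 +
          (M : ℝ) + 23)) ∧
    η 2 = 1 ∧ η 3 = 1 ∧
    (∀ M, 2 ≤ M → 36 / 37 ≤ η M) ∧ η 5 = 36 / 37 ∧
    Tendsto η atTop (nhds 1) := by
  -- basic facts for M ≥ 2
  have hx : ∀ M : ℕ, 2 ≤ M → (2:ℝ) ≤ (M:ℝ) := by
    intro M hM; exact_mod_cast Nat.cast_le.mpr hM
  have hQpos : ∀ x : ℝ, 2 ≤ x →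
      0 < x ^ 5 - x ^ 4 + 22 * x ^ 3 + 2 * x ^ 2 + x + 23 := by
    intro x h; nlinarith [pow_pos (by linarith : (0:ℝ) < x) 4, pow_pos (by linarith : (0:ℝ) < x) 5, sq_nonneg x]
  have hqpos : ∀ x : ℝ, 2 ≤ x →
      0 < x ^ 4 - 2 * x ^ 3 + 24 * x ^ 2 - 22 * x + 23 := by
    intro x h; nlinarith [pow_pos (by linarith : (0:ℝ) < x) 3, sq_nonneg x]
  have form2 : ∀ M : ℕ, 2 ≤ M → η M =
      ((M : ℝ) ^ 5 - (M : ℝ) ^ 4 + 22 * (M : ℝ) ^ 3 - 22 * (M : ℝ) ^ 2 +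
          121 * (M : ℝ) - 121) /
        ((M : ℝ) ^ 5 - (M : ℝ) ^ 4 + 22 * (M : ℝ) ^ 3 + 2 * (M : ℝ) ^ 2 +
          (M : ℝ) + 23) := by
    intro M hM
    have h2 := hx M hM
    set x : ℝ := (M : ℝ) with hxdef
    have hx0 : x ≠ 0 := by positivity
    have hx1 : x ^ 2 - 1 ≠ 0 := by nlinarith
    have hxm1 : x - 1 ≠ 0 := by nlinarith
    have hx11 : x ^ 2 + 11 ≠ 0 := by positivity
    have hq := hqpos x h2
    have hQ := hQpos x h2
    rw [hη M hM, ← hxdef]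
    rw [div_eq_div_iff (div_ne_zero (mul_ne_zero (by norm_num) hq.ne') (mul_ne_zero (mul_ne_zero hx0 (pow_ne_zero _ hx11)) (pow_ne_zero _ hxm1))) hQ.ne']
    field_simp
    ring
  have form1 : ∀ M : ℕ, 2 ≤ M → η M =
      ((M : ℝ) ^ 2 + 11) ^ 2 * ((M : ℝ) - 1) /
        (((M : ℝ) + 1) *
          ((M : ℝ) ^ 4 - 2 * (M : ℝ) ^ 3 + 24 * (M : ℝ) ^ 2 - 22 * (M : ℝ) + 23)) := by
    intro M hM
    have h2 := hx M hM
    set x : ℝ := (M : ℝ)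
    have hq := hqpos x h2
    have hQ := hQpos x h2
    rw [form2 M hM]
    rw [div_eq_div_iff (ne_of_gt hQ) (by positivity)]
    ring
  refine ⟨form1, form2, ?_, ?_, ?_, ?_, ?_⟩
  · rw [form2 2 le_rfl]; norm_num
  · rw [form2 3 (by norm_num)]; norm_num
  · intro M hM
    rw [form2 M hM]
    have h2 := hx M hM
    set x : ℝ := (M : ℝ) with hxdef
    have hQ := hQpos x h2
    rw [div_le_div_iff₀ (by norm_num) hQ]
    rcases le_or_gt M 5 with h | h
    · interval_cases M <;> norm_num [hxdef]
    · have h6 : (6:ℝ) ≤ x := by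
        rw [hxdef]; exact_mod_cast h
      nlinarith [pow_pos (by linarith : (0:ℝ) < x) 3, sq_nonneg (x-6), sq_nonneg x]
  · rw [form2 5 (by norm_num)]; norm_num
  · have key : ∀ᶠ M : ℕ in atTop, η M =
        (1 - (M:ℝ)⁻¹ + 22 * ((M:ℝ)⁻¹)^2 - 22 * ((M:ℝ)⁻¹)^3 + 121 * ((M:ℝ)⁻¹)^4 - 121 * ((M:ℝ)⁻¹)^5) /
        (1 - (M:ℝ)⁻¹ + 22 * ((M:ℝ)⁻¹)^2 + 2 * ((M:ℝ)⁻¹)^3 + ((M:ℝ)⁻¹)^4 + 23 * ((M:ℝ)⁻¹)^5) := by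
      filter_upwards [eventually_ge_atTop 2] with M hM
      have h2 := hx M hM
      set x : ℝ := (M : ℝ)
      have hx0 : x ≠ 0 := by positivity
      have hQ := hQpos x h2
      rw [form2 M hM]
      rw [div_eq_div_iff (ne_of_gt hQ) ?_]
      · field_simp
        ring
      · have : 0 < x^5 - x^4 + 22*x^3 + 2*x^2 + x + 23 := hQ
        have hx5 : (0:ℝ) < x^5 := by positivity
        rw [ne_eq]
        intro hcon
        have : x^5 * (1 - x⁻¹ + 22 * (x⁻¹)^2 + 2 * (x⁻¹)^3 + (x⁻¹)^4 + 23 * (x⁻¹)^5)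
            = x^5 - x^4 + 22*x^3 + 2*x^2 + x + 23 := by
          field_simp
        rw [hcon, mul_zero] at this
        linarith
    have hinv : Tendsto (fun M : ℕ => ((M:ℝ))⁻¹) atTop (nhds 0) :=
      tendsto_inv_atTop_zero.comp tendsto_natCast_atTop_atTop
    have hnum : Tendsto (fun M : ℕ =>
        (1 - (M:ℝ)⁻¹ + 22 * ((M:ℝ)⁻¹)^2 - 22 * ((M:ℝ)⁻¹)^3 + 121 * ((M:ℝ)⁻¹)^4 - 121 * ((M:ℝ)⁻¹)^5))
        atTop (nhds 1) := by
      have := ((((((tendsto_const_nhds (x := (1:ℝ))).sub hinv).add ((hinv.pow 2).const_mul 22)).sub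
        ((hinv.pow 3).const_mul 22)).add ((hinv.pow 4).const_mul 121)).sub
        ((hinv.pow 5).const_mul 121))
      simpa using this
    have hden : Tendsto (fun M : ℕ =>
        (1 - (M:ℝ)⁻¹ + 22 * ((M:ℝ)⁻¹)^2 + 2 * ((M:ℝ)⁻¹)^3 + ((M:ℝ)⁻¹)^4 + 23 * ((M:ℝ)⁻¹)^5))
        atTop (nhds 1) := by
      have := ((((((tendsto_const_nhds (x := (1:ℝ))).sub hinv).add ((hinv.pow 2).const_mul 22)).add
        ((hinv.pow 3).const_mul 2)).add (hinv.pow 4)).add ((hinv.pow 5).const_mul 23))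
      simpa using this
    have := hnum.div hden one_ne_zero
    simpa using this.congr' (key.mono fun _ h => h.symm)
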